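/- Let G be a cartesian comonad on a locally cartesian closed category E. If E is extensive, then the category E_G of G-coalgebras is extensive. -/

import Mathlib

open CategoryTheory CategoryTheory.Limits

universe w w' v u

variable {E : Type u} [Category.{v} E]

/-- A category with finite limits is locally cartesian closed if every pullback functor
`f* : E/J ⥤ E/I` has a right adjoint (pushforward). -/
def IsLCC (E : Type u) [Category.{v} E] [HasFiniteLimits E] : Prop :=
  ∀ ⦃I J : E⦄ (f : I ⟶ J), (Over.pullback f).IsLeftAdjoint

/-- The coproduct functor `E/A × E/B ⥤ E/(A + B)`. -/
@[simps]
noncomputable def coprodOverFunctor [HasBinaryCoproducts E] (A B : E) :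
    Over A × Over B ⥤ Over (A ⨿ B) where
  obj X := Over.mk (coprod.map X.1.hom X.2.hom)
  map {X Y} f := Over.homMk (coprod.map f.1.left f.2.left)
    (by dsimp; rw [coprod.map_map, Over.w, Over.w])
  map_id X := by ext; dsimp; ext <;> simp
  map_comp f g := by ext; dsimp; ext <;> simp

/-- A category with binary coproducts is extensive if each coproduct functor
`E/A × E/B ⥤ E/(A + B)` is an equivalence of categories. -/
def IsExtensive (E : Type u) [Category.{v} E] [HasBinaryCoproducts E] : Prop :=
  ∀ A B : E, (coprodOverFunctor A B).IsEquivalence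

instance coalgebraHasColimitsOfShape (G : Comonad E) {J : Type w} [Category.{w'} J]
    [HasColimitsOfShape J E] : HasColimitsOfShape J G.Coalgebra :=
  ⟨fun D => Comonad.hasColimit_of_comp_forget_hasColimit D⟩

instance coalgebraHasLimitsOfShape (G : Comonad E) {J : Type w} [Category.{w'} J]
    [HasLimitsOfShape J E] [PreservesLimitsOfShape J G.toFunctor] :
    HasLimitsOfShape J G.Coalgebra :=
  ⟨fun D => Comonad.forget_creates_limits_of_comonad_preserves D⟩

instance coalgebraHasFiniteLimits (G : Comonad E) [HasFiniteLimits E]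
    [PreservesFiniteLimits G.toFunctor] : HasFiniteLimits G.Coalgebra :=
  ⟨fun _ _ _ => inferInstance⟩

namespace CoalgExt

section Abstract

variable {C : Type u} [Category.{v} C] [HasBinaryCoproducts C] [HasInitial C]

/-- H1-left square property. -/
def SqL (A B : C) : Prop :=
  ∀ (q₁ : Over A) (q₂ : Over B),
    IsPullback coprod.inl q₁.hom (coprod.map q₁.hom q₂.hom) coprod.inl

/-- H1-right square property. -/
def SqR (A B : C) : Prop :=
  ∀ (q₁ : Over A) (q₂ : Over B),
    IsPullback coprod.inr q₂.hom (coprod.map q₁.hom q₂.hom) coprod.inr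

/-- H2: every map to `A ⨿ B` is isomorphic to a coproduct of maps. -/
def Decomp (A B : C) : Prop :=
  ∀ (X : C) (h : X ⟶ A ⨿ B), ∃ (X₁ X₂ : C) (f : X₁ ⟶ A) (g : X₂ ⟶ B)
    (i : X₁ ⨿ X₂ ≅ X), i.hom ≫ h = coprod.map f g

theorem isEquivalence_of (A B : C) (h1l : SqL A B) (h1r : SqR A B) (h2 : Decomp A B) :
    (coprodOverFunctor A B).IsEquivalence := by
  constructor
  · constructor
    intro p q k k' hkk'
    have hl : coprod.map k.1.left k.2.left = coprod.map k'.1.left k'.2.left := by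
      have := congrArg CommaMorphism.left hkk'
      simpa [coprodOverFunctor] using this
    have e1 : k.1.left = k'.1.left := by
      refine (h1l q.1 q.2).hom_ext ?_ ?_
      · have := congrArg (fun t => coprod.inl ≫ t) hl
        simpa using this
      · rw [Over.w k.1, Over.w k'.1]
    have e2 : k.2.left = k'.2.left := by
      refine (h1r q.1 q.2).hom_ext ?_ ?_
      · have := congrArg (fun t => coprod.inr ≫ t) hl
        simpa using this
      · rw [Over.w k.2, Over.w k'.2]
    exact Prod.ext (Over.OverMorphism.ext e1) (Over.OverMorphism.ext e2)
  · constructor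
    intro p q m
    have wm : m.left ≫ coprod.map q.1.hom q.2.hom = coprod.map p.1.hom p.2.hom := by
      simpa [coprodOverFunctor] using Over.w m
    have w1 : (coprod.inl ≫ m.left) ≫ coprod.map q.1.hom q.2.hom = p.1.hom ≫ coprod.inl := by
      erw [Category.assoc, wm]; simp
    have w2 : (coprod.inr ≫ m.left) ≫ coprod.map q.1.hom q.2.hom = p.2.hom ≫ coprod.inr := by
      erw [Category.assoc, wm]; simp
    refine ⟨(Over.homMk ((h1l q.1 q.2).lift (coprod.inl ≫ m.left) p.1.hom w1)
        ((h1l q.1 q.2).lift_snd _ _ _),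
      Over.homMk ((h1r q.1 q.2).lift (coprod.inr ≫ m.left) p.2.hom w2)
        ((h1r q.1 q.2).lift_snd _ _ _)), ?_⟩
    ext
    dsimp [coprodOverFunctor]
    ext
    · simpa using (h1l q.1 q.2).lift_fst (coprod.inl ≫ m.left) p.1.hom w1
    · simpa using (h1r q.1 q.2).lift_fst (coprod.inr ≫ m.left) p.2.hom w2
  · constructor
    intro z
    obtain ⟨X₁, X₂, f, g, i, comm⟩ := h2 z.left z.hom
    exact ⟨(Over.mk f, Over.mk g), ⟨Over.isoMk i (by simpa [coprodOverFunctor] using comm)⟩⟩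

/-- If `h : X ⟶ A ⨿ B` and we have pullback squares along the two injections, then the
two projections form a colimit binary cofan. -/
theorem cofan_isColimit (A B : C) (h1l : SqL A B) (h1r : SqR A B) (h2 : Decomp A B)
    {X P Q : C} {h : X ⟶ A ⨿ B} {p₁ : P ⟶ X} {a : P ⟶ A} {p₂ : Q ⟶ X} {b : Q ⟶ B}
    (hP : IsPullback p₁ a h coprod.inl) (hQ : IsPullback p₂ b h coprod.inr) :
    Nonempty (IsColimit (BinaryCofan.mk p₁ p₂)) := by
  obtain ⟨X₁, X₂, f, g, i, comm⟩ := h2 X h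
  have isoSq : IsPullback i.hom (coprod.map f g) h (𝟙 (A ⨿ B)) :=
    IsPullback.of_horiz_isIso ⟨by simpa using comm⟩
  have sq1 : IsPullback (coprod.inl ≫ i.hom) f h coprod.inl := by
    simpa using (h1l (Over.mk f) (Over.mk g)).paste_horiz isoSq
  have sq2 : IsPullback (coprod.inr ≫ i.hom) g h coprod.inr := by
    simpa using (h1r (Over.mk f) (Over.mk g)).paste_horiz isoSq
  let e₁ : P ≅ X₁ := hP.isoIsPullback _ _ sq1
  let e₂ : Q ≅ X₂ := hQ.isoIsPullback _ _ sq2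
  have he₁ : e₁.hom ≫ (coprod.inl ≫ i.hom) = p₁ := hP.isoIsPullback_hom_fst _ _ sq1
  have he₂ : e₂.hom ≫ (coprod.inr ≫ i.hom) = p₂ := hQ.isoIsPullback_hom_fst _ _ sq2
  have hi₁ : coprod.inl ≫ i.hom = e₁.inv ≫ p₁ := by rw [← he₁, Iso.inv_hom_id_assoc]
  have hi₂ : coprod.inr ≫ i.hom = e₂.inv ≫ p₂ := by rw [← he₂, Iso.inv_hom_id_assoc]
  refine ⟨BinaryCofan.IsColimit.mk _
    (fun {T} u v => i.inv ≫ coprod.desc (e₁.inv ≫ u) (e₂.inv ≫ v)) ?_ ?_ ?_⟩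
  · intro T u v
    show p₁ ≫ (i.inv ≫ coprod.desc (e₁.inv ≫ u) (e₂.inv ≫ v)) = u
    rw [← he₁]
    simp [coprod.inl_desc, coprod.inr_desc, coprod.inl_desc_assoc, coprod.inr_desc_assoc]
  · intro T u v
    show p₂ ≫ (i.inv ≫ coprod.desc (e₁.inv ≫ u) (e₂.inv ≫ v)) = v
    rw [← he₂]
    simp [coprod.inl_desc, coprod.inr_desc, coprod.inl_desc_assoc, coprod.inr_desc_assoc]
  · intro T u v (m : X ⟶ T) hu hv
    replace hu : p₁ ≫ m = u := hu
    replace hv : p₂ ≫ m = v := hv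
    show @Eq (X ⟶ T) m (i.inv ≫ coprod.desc (e₁.inv ≫ u) (e₂.inv ≫ v))
    rw [← cancel_epi i.hom]
    apply coprod.hom_ext
    · rw [reassoc_of% hi₁, hu]
      simp [coprod.inl_desc, coprod.inr_desc, coprod.inl_desc_assoc, coprod.inr_desc_assoc]
    · rw [reassoc_of% hi₂, hv]
      simp [coprod.inl_desc, coprod.inr_desc, coprod.inl_desc_assoc, coprod.inr_desc_assoc]

end Abstract

section Base

variable {C : Type u} [Category.{v} C] [HasBinaryCoproducts C] [HasInitial C]

theorem sqL_of_isEquivalence (A B : C) (hF : (coprodOverFunctor A B).IsEquivalence) :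
    SqL A B := by
  intro q₁ q₂
  haveI := hF
  set F := coprodOverFunctor A B with hFdef
  have eq : coprod.inl ≫ coprod.map q₁.hom q₂.hom = q₁.hom ≫ coprod.inl := by simp
  have key : ∀ (T : C) (u : T ⟶ q₁.left ⨿ q₂.left) (t : T ⟶ A)
      (_ : u ≫ coprod.map q₁.hom q₂.hom = t ≫ coprod.inl),
      ∃! l : T ⟶ q₁.left, l ≫ coprod.inl = u ∧ l ≫ q₁.hom = t := by
    intro T u t w
    let src : Over A × Over B := (Over.mk t, Over.mk (initial.to B))
    let m : F.obj src ⟶ F.obj (q₁, q₂) :=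
      Over.homMk (coprod.desc u (initial.to _)) (by
        show coprod.desc u (initial.to _) ≫ coprod.map q₁.hom q₂.hom =
          coprod.map t (initial.to B)
        apply coprod.hom_ext
        · simpa [coprod.inl_desc, coprod.inr_desc, coprod.inl_desc_assoc, coprod.inr_desc_assoc] using w
        · apply initial.hom_ext)
    refine ⟨(F.preimage m).1.left, ⟨?_, ?_⟩, ?_⟩
    · have hm : coprod.map (F.preimage m).1.left (F.preimage m).2.left =
          coprod.desc u (initial.to _) :=
        congrArg CommaMorphism.left (F.map_preimage m)
      have h2 := congrArg (fun z => coprod.inl ≫ z) hm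
      simpa [coprod.inl_desc, coprod.inr_desc, coprod.inl_desc_assoc, coprod.inr_desc_assoc] using h2
    · exact Over.w (F.preimage m).1
    · rintro l ⟨hl1, hl2⟩
      let k' : src ⟶ (q₁, q₂) :=
        (Over.homMk l hl2, Over.homMk (initial.to q₂.left) (initial.hom_ext _ _))
      have hmk : F.map k' = m := by
        ext
        show coprod.map l (initial.to q₂.left) = coprod.desc u (initial.to _)
        apply coprod.hom_ext
        · simpa [coprod.inl_desc, coprod.inr_desc, coprod.inl_desc_assoc, coprod.inr_desc_assoc] using hl1
        · apply initial.hom_ext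
      have hk : k' = F.preimage m := F.map_injective (by rw [hmk, F.map_preimage])
      exact congrArg (fun z => z.1.left) hk
  exact IsPullback.of_isLimit (PullbackCone.IsLimit.mk eq
    (fun s => (key s.pt s.fst s.snd s.condition).exists.choose)
    (fun s => (key s.pt s.fst s.snd s.condition).exists.choose_spec.1)
    (fun s => (key s.pt s.fst s.snd s.condition).exists.choose_spec.2)
    (fun s l hl1 hl2 => by
      have := (key s.pt s.fst s.snd s.condition).unique (y₁ := l)
        (y₂ := (key s.pt s.fst s.snd s.condition).exists.choose)
      exact this ⟨hl1, hl2⟩ (key s.pt s.fst s.snd s.condition).exists.choose_spec))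

theorem sqR_of_isEquivalence (A B : C) (hF : (coprodOverFunctor A B).IsEquivalence) :
    SqR A B := by
  intro q₁ q₂
  haveI := hF
  set F := coprodOverFunctor A B with hFdef
  have eq : coprod.inr ≫ coprod.map q₁.hom q₂.hom = q₂.hom ≫ coprod.inr := by simp
  have key : ∀ (T : C) (u : T ⟶ q₁.left ⨿ q₂.left) (t : T ⟶ B)
      (_ : u ≫ coprod.map q₁.hom q₂.hom = t ≫ coprod.inr),
      ∃! l : T ⟶ q₂.left, l ≫ coprod.inr = u ∧ l ≫ q₂.hom = t := by
    intro T u t w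
    let src : Over A × Over B := (Over.mk (initial.to A), Over.mk t)
    let m : F.obj src ⟶ F.obj (q₁, q₂) :=
      Over.homMk (coprod.desc (initial.to _) u) (by
        show coprod.desc (initial.to _) u ≫ coprod.map q₁.hom q₂.hom =
          coprod.map (initial.to A) t
        apply coprod.hom_ext
        · apply initial.hom_ext
        · simpa [coprod.inl_desc, coprod.inr_desc, coprod.inl_desc_assoc, coprod.inr_desc_assoc] using w)
    refine ⟨(F.preimage m).2.left, ⟨?_, ?_⟩, ?_⟩
    · have hm : coprod.map (F.preimage m).1.left (F.preimage m).2.left =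
          coprod.desc (initial.to _) u :=
        congrArg CommaMorphism.left (F.map_preimage m)
      have h2 := congrArg (fun z => coprod.inr ≫ z) hm
      simpa [coprod.inl_desc, coprod.inr_desc, coprod.inl_desc_assoc, coprod.inr_desc_assoc] using h2
    · exact Over.w (F.preimage m).2
    · rintro l ⟨hl1, hl2⟩
      let k' : src ⟶ (q₁, q₂) :=
        (Over.homMk (initial.to q₁.left) (initial.hom_ext _ _), Over.homMk l hl2)
      have hmk : F.map k' = m := by
        ext
        show coprod.map (initial.to q₁.left) l = coprod.desc (initial.to _) u
        apply coprod.hom_ext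
        · apply initial.hom_ext
        · simpa [coprod.inl_desc, coprod.inr_desc, coprod.inl_desc_assoc, coprod.inr_desc_assoc] using hl1
      have hk : k' = F.preimage m := F.map_injective (by rw [hmk, F.map_preimage])
      exact congrArg (fun z => z.2.left) hk
  exact IsPullback.of_isLimit (PullbackCone.IsLimit.mk eq
    (fun s => (key s.pt s.fst s.snd s.condition).exists.choose)
    (fun s => (key s.pt s.fst s.snd s.condition).exists.choose_spec.1)
    (fun s => (key s.pt s.fst s.snd s.condition).exists.choose_spec.2)
    (fun s l hl1 hl2 => by
      exact (key s.pt s.fst s.snd s.condition).unique ⟨hl1, hl2⟩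
        (key s.pt s.fst s.snd s.condition).exists.choose_spec))

theorem decomp_of_isEquivalence (A B : C) (hF : (coprodOverFunctor A B).IsEquivalence) :
    Decomp A B := by
  intro X h
  haveI := hF
  let z : Over (A ⨿ B) := Over.mk h
  let p := (coprodOverFunctor A B).objPreimage z
  let i := (coprodOverFunctor A B).objObjPreimageIso z
  exact ⟨p.1.left, p.2.left, p.1.hom, p.2.hom, (Over.forget _).mapIso i,
    Over.w i.hom⟩

end Base

section Lift

/-- A binary cofan whose image cofan (with coproduct taken of images) is colimit maps to a
colimit cocone. -/
noncomputable def mapBinaryCofanIsColimit {C₁ : Type*} {D₁ : Type*} [Category C₁] [Category D₁]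
    (F : C₁ ⥤ D₁) {X Y Z : C₁} (f : X ⟶ Z) (g : Y ⟶ Z)
    (t : IsColimit (BinaryCofan.mk (F.map f) (F.map g))) :
    IsColimit (F.mapCocone (BinaryCofan.mk f g)) where
  desc s := t.desc (BinaryCofan.mk (s.ι.app ⟨WalkingPair.left⟩) (s.ι.app ⟨WalkingPair.right⟩))
  fac s := by
    rintro ⟨⟨⟩⟩
    · exact t.fac (BinaryCofan.mk (s.ι.app ⟨WalkingPair.left⟩) (s.ι.app ⟨WalkingPair.right⟩))
        ⟨WalkingPair.left⟩
    · exact t.fac (BinaryCofan.mk (s.ι.app ⟨WalkingPair.left⟩) (s.ι.app ⟨WalkingPair.right⟩))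
        ⟨WalkingPair.right⟩
  uniq s m w := t.uniq
    (BinaryCofan.mk (s.ι.app ⟨WalkingPair.left⟩) (s.ι.app ⟨WalkingPair.right⟩)) m (by
      rintro ⟨⟨⟩⟩
      · exact w ⟨WalkingPair.left⟩
      · exact w ⟨WalkingPair.right⟩)

end Lift

end CoalgExt

theorem coalgebras_extensive' {E : Type u} [Category.{v} E] [HasFiniteLimits E]
    [HasFiniteCoproducts E]
    (hext : ∀ A B : E, (coprodOverFunctor A B).IsEquivalence) (G : Comonad E)
    [PreservesFiniteLimits G.toFunctor]
    [HasBinaryCoproducts G.Coalgebra] [HasInitial G.Coalgebra] [HasFiniteLimits G.Coalgebra] :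
    ∀ A B : G.Coalgebra, (coprodOverFunctor A B).IsEquivalence := by
  intro A B
  have hsqL : ∀ A' B' : E, CoalgExt.SqL A' B' := fun A' B' =>
    CoalgExt.sqL_of_isEquivalence A' B' (hext A' B')
  have hsqR : ∀ A' B' : E, CoalgExt.SqR A' B' := fun A' B' =>
    CoalgExt.sqR_of_isEquivalence A' B' (hext A' B')
  have hdec : ∀ A' B' : E, CoalgExt.Decomp A' B' := fun A' B' =>
    CoalgExt.decomp_of_isEquivalence A' B' (hext A' B')
  set U : G.Coalgebra ⥤ E := G.forget with hU
  haveI : PreservesColimitsOfSize.{v,v} U := G.adj.leftAdjoint_preservesColimits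
  have hsqLc : CoalgExt.SqL A B := by
    intro q₁ q₂
    refine IsPullback.of_map U (by simp) ?_
    have base := hsqL (U.obj A) (U.obj B) (Over.mk (U.map q₁.hom)) (Over.mk (U.map q₂.hom))
    refine base.of_iso (Iso.refl _) (asIso (coprodComparison U q₁.left q₂.left)) (Iso.refl _)
      (asIso (coprodComparison U A B)) ?_ ?_ ?_ ?_
    · simp only [asIso_hom, Iso.refl_hom, Category.id_comp]
      exact coprodComparison_inl U
    · simp
    · simp [coprodComparison_natural]
    · simp only [asIso_hom, Iso.refl_hom, Category.id_comp]
      exact coprodComparison_inl U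
  have hsqRc : CoalgExt.SqR A B := by
    intro q₁ q₂
    refine IsPullback.of_map U (by simp) ?_
    have base := hsqR (U.obj A) (U.obj B) (Over.mk (U.map q₁.hom)) (Over.mk (U.map q₂.hom))
    refine base.of_iso (Iso.refl _) (asIso (coprodComparison U q₁.left q₂.left)) (Iso.refl _)
      (asIso (coprodComparison U A B)) ?_ ?_ ?_ ?_
    · simp only [asIso_hom, Iso.refl_hom, Category.id_comp]
      exact coprodComparison_inr U
    · simp
    · simp [coprodComparison_natural]
    · simp only [asIso_hom, Iso.refl_hom, Category.id_comp]
      exact coprodComparison_inr U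
  have hdecc : CoalgExt.Decomp A B := by
    intro X h
    haveI := preservesLimit_of_createsLimit_and_hasLimit (cospan h (coprod.inl : A ⟶ A ⨿ B)) U
    haveI := preservesLimit_of_createsLimit_and_hasLimit (cospan h (coprod.inr : B ⟶ A ⨿ B)) U
    have hP := IsPullback.of_hasPullback h (coprod.inl : A ⟶ A ⨿ B)
    have hQ := IsPullback.of_hasPullback h (coprod.inr : B ⟶ A ⨿ B)
    have hP' := hP.map U
    have hQ' := hQ.map U
    let c : U.obj A ⨿ U.obj B ≅ U.obj (A ⨿ B) := asIso (coprodComparison U A B)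
    have sqP : IsPullback (U.map (pullback.fst h coprod.inl)) (U.map (pullback.snd h coprod.inl))
        (U.map h ≫ c.inv) coprod.inl := by
      refine hP'.of_iso (Iso.refl _) (Iso.refl _) (Iso.refl _) c.symm ?_ ?_ ?_ ?_
      · simp
      · simp
      · simp [c]
      · simp [c, map_inl_inv_coprodComparison]
    have sqQ : IsPullback (U.map (pullback.fst h coprod.inr)) (U.map (pullback.snd h coprod.inr))
        (U.map h ≫ c.inv) coprod.inr := by
      refine hQ'.of_iso (Iso.refl _) (Iso.refl _) (Iso.refl _) c.symm ?_ ?_ ?_ ?_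
      · simp
      · simp
      · simp [c]
      · simp [c, map_inr_inv_coprodComparison]
    obtain ⟨t'⟩ := CoalgExt.cofan_isColimit (U.obj A) (U.obj B)
      (hsqL _ _) (hsqR _ _) (hdec _ _) sqP sqQ
    have tc : IsColimit (BinaryCofan.mk (pullback.fst h coprod.inl)
        (pullback.fst h coprod.inr)) :=
      isColimitOfReflects U (CoalgExt.mapBinaryCofanIsColimit U _ _ t')
    let i : pullback h (coprod.inl : A ⟶ A ⨿ B) ⨿ pullback h (coprod.inr : B ⟶ A ⨿ B) ≅ X :=
      (coprodIsCoprod (pullback h (coprod.inl : A ⟶ A ⨿ B))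
      (pullback h (coprod.inr : B ⟶ A ⨿ B))).coconePointUniqueUpToIso tc
    have hi1 : coprod.inl ≫ i.hom = pullback.fst h coprod.inl :=
      (coprodIsCoprod _ _).comp_coconePointUniqueUpToIso_hom tc ⟨WalkingPair.left⟩
    have hi2 : coprod.inr ≫ i.hom = pullback.fst h coprod.inr :=
      (coprodIsCoprod _ _).comp_coconePointUniqueUpToIso_hom tc ⟨WalkingPair.right⟩
    refine ⟨_, _, pullback.snd h coprod.inl, pullback.snd h coprod.inr, i, ?_⟩
    apply coprod.hom_ext
    · rw [reassoc_of% hi1, pullback.condition]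
      simp [coprod.inl_desc, coprod.inr_desc, coprod.inl_desc_assoc, coprod.inr_desc_assoc]
    · rw [reassoc_of% hi2, pullback.condition]
      simp [coprod.inl_desc, coprod.inr_desc, coprod.inl_desc_assoc, coprod.inr_desc_assoc]
  exact CoalgExt.isEquivalence_of A B hsqLc hsqRc hdecc

/-- for a cartesian comonad `G` on an extensive locally cartesian closed
category `E`, the category `E_G` of `G`-coalgebras is extensive. -/
theorem coalgebras_extensive [HasFiniteLimits E] [HasFiniteCoproducts E] (hlcc : IsLCC E)
    (hext : IsExtensive E) (G : Comonad E) [PreservesFiniteLimits G.toFunctor] :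
    IsExtensive G.Coalgebra :=
  coalgebras_extensive' hext G
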